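/- Let C be an abelian category and 𝒲 a class of objects of C closed under isomorphisms and finite direct sums. Let 0→X→Y→Z→0 be a short exact sequence in C that is both Hom(𝒲,−)-exact and Hom(−,𝒲)-exact, and suppose Y belongs to the Gorenstein category G(𝒲). Then X belongs to G(𝒲) if and only if Z belongs to G(𝒲). -/

import Mathlib

open CategoryTheory Category Limits

universe v u

variable {C : Type u} [Category.{v} C] [Abelian C]

def SES {A B X : C} (f : A ⟶ B) (g : B ⟶ X) : Prop :=
  ∃ w : f ≫ g = 0, (CategoryTheory.ShortComplex.mk f g w).ShortExact

def CovExact (𝒲 : Set C) {A B X : C} (f : A ⟶ B) (g : B ⟶ X) : Prop :=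
  ∀ W ∈ 𝒲,
    (Function.Injective fun u : W ⟶ A => u ≫ f) ∧
    (∀ v : W ⟶ B, v ≫ g = 0 → ∃ u : W ⟶ A, u ≫ f = v) ∧
    (Function.Surjective fun v : W ⟶ B => v ≫ g)

def ContraExact (𝒲 : Set C) {A B X : C} (f : A ⟶ B) (g : B ⟶ X) : Prop :=
  ∀ W ∈ 𝒲,
    (Function.Injective fun u : X ⟶ W => g ≫ u) ∧
    (∀ v : B ⟶ W, f ≫ v = 0 → ∃ u : X ⟶ W, g ≫ u = v) ∧
    (Function.Surjective fun v : B ⟶ W => f ≫ v)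

/-- A proper `𝒲`-resolution of `A` with terms `W i`: short exact sequences
`0 ⟶ K (i+1) ⟶ W i ⟶ K i ⟶ 0` with `K 0 = A`, each `W i ∈ 𝒲`, each `Hom(𝒲,-)`-exact. -/
structure ProperResolution (𝒲 : Set C) (A : C) (W : ℕ → C) where
  K : ℕ → C
  hK : K 0 = A
  g : ∀ i, K (i + 1) ⟶ W i
  f : ∀ i, W i ⟶ K i
  mem : ∀ i, W i ∈ 𝒲
  ses : ∀ i, SES (g i) (f i)
  proper : ∀ i, CovExact 𝒲 (g i) (f i)

/-- The proper resolution is in addition `Hom(-,𝒲)`-exact. -/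
def ProperResolution.IsContraExact {𝒲 : Set C} {A : C} {W : ℕ → C}
    (R : ProperResolution 𝒲 A W) : Prop :=
  ∀ i, ContraExact 𝒲 (R.g i) (R.f i)

/-- A coproper `𝒲`-coresolution of `A` with terms `W i`: short exact sequences
`0 ⟶ K i ⟶ W i ⟶ K (i+1) ⟶ 0` with `K 0 = A`, each `W i ∈ 𝒲`, each `Hom(-,𝒲)`-exact. -/
structure CoproperCoresolution (𝒲 : Set C) (A : C) (W : ℕ → C) where
  K : ℕ → C
  hK : K 0 = A
  g : ∀ i, K i ⟶ W i
  f : ∀ i, W i ⟶ K (i + 1)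
  mem : ∀ i, W i ∈ 𝒲
  ses : ∀ i, SES (g i) (f i)
  coproper : ∀ i, ContraExact 𝒲 (g i) (f i)

/-- The coproper coresolution is in addition `Hom(𝒲,-)`-exact. -/
def CoproperCoresolution.IsCovExact {𝒲 : Set C} {A : C} {W : ℕ → C}
    (R : CoproperCoresolution 𝒲 A W) : Prop :=
  ∀ i, CovExact 𝒲 (R.g i) (R.f i)

/-- Membership in the Gorenstein category `G(𝒲)`: `X` admits both a proper `𝒲`-resolution
which is `Hom(-,𝒲)`-exact and a coproper `𝒲`-coresolution which is `Hom(𝒲,-)`-exact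
(i.e. a complete `𝒲`-resolution). -/
def MemGW (𝒲 : Set C) (X : C) : Prop :=
  (∃ (W : ℕ → C) (R : ProperResolution 𝒲 X W), R.IsContraExact) ∧
  (∃ (W : ℕ → C) (R : CoproperCoresolution 𝒲 X W), R.IsCovExact)


namespace GW

open CategoryTheory.Abelian CategoryTheory.Abelian.Pseudoelement
open scoped Pseudoelement

variable {C : Type u} [Category.{v} C] [Abelian C]

section SESAPI

variable {A B Z : C} {f : A ⟶ B} {g : B ⟶ Z}

lemma _root_.SES.w (h : SES f g) : f ≫ g = 0 := h.1

lemma _root_.SES.mono (h : SES f g) : Mono f := h.2.mono_f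

lemma _root_.SES.epi (h : SES f g) : Epi g := h.2.epi_g

/-- kernel property -/
lemma _root_.SES.lift (h : SES f g) {T : C} (v : T ⟶ B) (hv : v ≫ g = 0) :
    ∃ u : T ⟶ A, u ≫ f = v := by
  obtain ⟨u, hu⟩ := KernelFork.IsLimit.lift' h.2.fIsKernel v hv
  exact ⟨u, by simpa using hu⟩

/-- cokernel property -/
lemma _root_.SES.desc (h : SES f g) {T : C} (v : B ⟶ T) (hv : f ≫ v = 0) :
    ∃ u : Z ⟶ T, g ≫ u = v := by
  obtain ⟨u, hu⟩ := CokernelCofork.IsColimit.desc' h.2.gIsCokernel v hv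
  exact ⟨u, by simpa using hu⟩

lemma _root_.SES.pexact (h : SES f g) : ∀ b : B, g b = 0 → ∃ a : A, f a = b :=
  pseudo_exact_of_exact h.2.exact

lemma _root_.SES.pexact' (h : SES f g) : ∀ a : A, g (f a) = 0 := fun a => by
  rw [← Pseudoelement.comp_apply, h.w]; exact zero_apply _ _

lemma _root_.SES.psurj (h : SES f g) : Function.Surjective (pseudoApply g) :=
  have := h.epi; pseudo_surjective_of_epi g

lemma _root_.SES.pinj (h : SES f g) : Function.Injective (pseudoApply f) :=
  have := h.mono; pseudo_injective_of_mono f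

lemma pseudo_id {P : C} (a : Pseudoelement P) : pseudoApply (𝟙 P) a = a :=
  Quotient.inductionOn a fun x =>
    Quotient.sound ⟨x.1, 𝟙 x.1, 𝟙 x.1, (show Epi (𝟙 x.1) by infer_instance), (show Epi (𝟙 x.1) by infer_instance), by simp [app]⟩

lemma sesOfPseudo (w : f ≫ g = 0) (hm : Mono f) (he : Epi g)
    (hex : ∀ b : B, g b = 0 → ∃ a : A, f a = b) : SES f g :=
  ⟨w, CategoryTheory.ShortComplex.ShortExact.mk'
    (exact_of_pseudo_exact _ hex) hm he⟩

lemma covExact_of_lift {𝒲 : Set C} (h : SES f g)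
    (hl : ∀ W ∈ 𝒲, ∀ v : W ⟶ Z, ∃ u : W ⟶ B, u ≫ g = v) :
    CovExact 𝒲 f g := by
  intro W hW
  have := h.mono
  exact ⟨fun u v huv => (cancel_mono f).1 huv, fun v hv => h.lift v hv, fun v => hl W hW v⟩

lemma contraExact_of_ext {𝒲 : Set C} (h : SES f g)
    (hl : ∀ W ∈ 𝒲, ∀ v : A ⟶ W, ∃ u : B ⟶ W, f ≫ u = v) :
    ContraExact 𝒲 f g := by
  intro W hW
  have := h.epi
  exact ⟨fun u v huv => (cancel_epi g).1 huv, fun v hv => h.desc v hv, fun v => hl W hW v⟩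

lemma _root_.CovExact.lift {𝒲 : Set C} (h : CovExact 𝒲 f g) {W : C} (hW : W ∈ 𝒲) (v : W ⟶ Z) :
    ∃ u : W ⟶ B, u ≫ g = v :=
  (h W hW).2.2 v

lemma _root_.ContraExact.ext {𝒲 : Set C} (h : ContraExact 𝒲 f g) {W : C} (hW : W ∈ 𝒲) (v : A ⟶ W) :
    ∃ u : B ⟶ W, f ≫ u = v :=
  (h W hW).2.2 v

end SESAPI

end GW

namespace GW

open CategoryTheory.Abelian CategoryTheory.Abelian.Pseudoelement
open scoped Pseudoelement

variable {C : Type u} [Category.{v} C] [Abelian C]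

section Transport

variable {𝒲 : Set C} {A B Z Z' : C} {f : A ⟶ B} {g : B ⟶ Z} (e : Z ≅ Z')

lemma ses_comp_iso (h : SES f g) : SES f (g ≫ e.hom) := by
  have := h.mono
  have := h.epi
  refine sesOfPseudo (by rw [← Category.assoc, h.w, zero_comp]) inferInstance inferInstance ?_
  intro b hb
  refine h.pexact b ?_
  have : Mono e.hom := inferInstance
  apply pseudo_injective_of_mono e.hom
  rw [apply_zero, ← Pseudoelement.comp_apply]
  exact hb

lemma cov_comp_iso (h : CovExact 𝒲 f g) : CovExact 𝒲 f (g ≫ e.hom) := by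
  intro W hW
  obtain ⟨h1, h2, h3⟩ := h W hW
  refine ⟨h1, fun v hv => h2 v ?_, fun t => ?_⟩
  · have hv' : v ≫ g ≫ e.hom = 0 := hv
    have := hv' =≫ e.inv
    simpa using this
  · obtain ⟨u, hu⟩ := h3 (t ≫ e.inv)
    refine ⟨u, ?_⟩
    show u ≫ g ≫ e.hom = t
    have hu' : u ≫ g = t ≫ e.inv := hu
    rw [← Category.assoc, hu']
    simp

lemma contra_comp_iso (h : ContraExact 𝒲 f g) : ContraExact 𝒲 f (g ≫ e.hom) := by
  intro W hW
  obtain ⟨h1, h2, h3⟩ := h W hW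
  refine ⟨fun u v huv => ?_, fun v hv => ?_, h3⟩
  · have huv' : (g ≫ e.hom) ≫ u = (g ≫ e.hom) ≫ v := huv
    simp only [Category.assoc] at huv'
    have := h1 huv'
    simpa using e.inv ≫= this
  · obtain ⟨u, hu⟩ := h2 v hv
    refine ⟨e.inv ≫ u, ?_⟩
    show (g ≫ e.hom) ≫ e.inv ≫ u = v
    simpa using hu

end Transport

end GW

namespace GW

variable {C : Type u} [Category.{v} C] [Abelian C]

/-- `A` has a proper `𝒲`-resolution which is moreover `Hom(-,𝒲)`-exact. -/
def Res (𝒲 : Set C) (A : C) : Prop :=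
  ∃ (W : ℕ → C) (R : ProperResolution 𝒲 A W), R.IsContraExact

/-- `A` has a coproper `𝒲`-coresolution which is moreover `Hom(𝒲,-)`-exact. -/
def Cores (𝒲 : Set C) (A : C) : Prop :=
  ∃ (W : ℕ → C) (R : CoproperCoresolution 𝒲 A W), R.IsCovExact

lemma memGW_iff {𝒲 : Set C} {A : C} : MemGW 𝒲 A ↔ Res 𝒲 A ∧ Cores 𝒲 A := Iff.rfl

/-- One resolution step onto `A` with kernel in `S`. -/
def Step (𝒲 S : Set C) (A : C) : Prop :=
  ∃ (W K : C) (g : K ⟶ W) (f : W ⟶ A),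
    W ∈ 𝒲 ∧ K ∈ S ∧ SES g f ∧ CovExact 𝒲 g f ∧ ContraExact 𝒲 g f

/-- The corecursive builder: if every element of `S` admits a good one-step resolution with
kernel again in `S`, then every element of `S` has a full resolution. -/
lemma res_of_coalgebra {𝒲 S : Set C} (hS : ∀ A ∈ S, Step 𝒲 S A) {A : C} (hA : A ∈ S) :
    Res 𝒲 A := by
  have key : ∀ p : {K : C // K ∈ S}, ∃ (q : {K : C // K ∈ S}) (W' : C)
      (g : q.1 ⟶ W') (f : W' ⟶ p.1),
      W' ∈ 𝒲 ∧ SES g f ∧ CovExact 𝒲 g f ∧ ContraExact 𝒲 g f := by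
    rintro ⟨K, hK⟩
    obtain ⟨W', K', g, f, hW', hK', hses, hcov, hcon⟩ := hS K hK
    exact ⟨⟨K', hK'⟩, W', g, f, hW', hses, hcov, hcon⟩
  choose next W' g f hW hses hcov hcon using key
  let st : ℕ → {K : C // K ∈ S} := fun n => Nat.rec ⟨A, hA⟩ (fun _ p => next p) n
  refine ⟨fun n => W' (st n),
    { K := fun n => (st n).1
      hK := rfl
      g := fun i => g (st i)
      f := fun i => f (st i)
      mem := fun i => hW (st i)
      ses := fun i => hses (st i)
      proper := fun i => hcov (st i) },
    fun i => hcon (st i)⟩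

/-- Unfold one step of a resolution. -/
lemma _root_.GW.Res.step {𝒲 : Set C} {A : C} (h : Res 𝒲 A) : Step 𝒲 (Res 𝒲) A := by
  obtain ⟨W, R, hc⟩ := h
  refine ⟨W 0, R.K 1, R.g 0, R.f 0 ≫ (eqToIso R.hK).hom, R.mem 0, ?_,
    ses_comp_iso _ (R.ses 0), cov_comp_iso _ (R.proper 0), contra_comp_iso _ (hc 0)⟩
  exact ⟨fun n => W (n + 1),
    { K := fun n => R.K (n + 1)
      hK := rfl
      g := fun i => R.g (i + 1)
      f := fun i => R.f (i + 1)
      mem := fun i => R.mem (i + 1)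
      ses := fun i => R.ses (i + 1)
      proper := fun i => R.proper (i + 1) },
    fun i => hc (i + 1)⟩

end GW

namespace GW

variable {C : Type u} [Category.{v} C] [Abelian C]

section Op

variable (𝒲 : Set C)

/-- The class `𝒲` viewed in the opposite category. -/
def Wop : Set Cᵒᵖ := {W : Cᵒᵖ | W.unop ∈ 𝒲}

variable {𝒲}

lemma wop_iso (hiso : ∀ {U V : C}, (U ≅ V) → U ∈ 𝒲 → V ∈ 𝒲) :
    ∀ {U V : Cᵒᵖ}, (U ≅ V) → U ∈ Wop 𝒲 → V ∈ Wop 𝒲 :=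
  fun e hU => hiso e.unop.symm hU

/-- `unop` of a binary biproduct in `Cᵒᵖ` is isomorphic to the biproduct of the `unop`s. -/
noncomputable def biprodUnopIso (U V : Cᵒᵖ) :
    (U ⊞ V).unop ≅ U.unop ⊞ V.unop where
  hom := biprod.lift (biprod.inl : U ⟶ U ⊞ V).unop (biprod.inr : V ⟶ U ⊞ V).unop
  inv := biprod.desc (biprod.fst : U ⊞ V ⟶ U).unop (biprod.snd : U ⊞ V ⟶ V).unop
  hom_inv_id := by
    rw [biprod.lift_desc, ← unop_comp, ← unop_comp, ← unop_add, biprod.total, unop_id]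
  inv_hom_id := by
    ext <;> simp [← unop_comp]

lemma wop_sum (hiso : ∀ {U V : C}, (U ≅ V) → U ∈ 𝒲 → V ∈ 𝒲)
    (hsum : ∀ {U V : C}, U ∈ 𝒲 → V ∈ 𝒲 → (U ⊞ V) ∈ 𝒲) :
    ∀ {U V : Cᵒᵖ}, U ∈ Wop 𝒲 → V ∈ Wop 𝒲 → (U ⊞ V) ∈ Wop 𝒲 :=
  fun {U V} hU hV => hiso (biprodUnopIso U V).symm (hsum hU hV)

section OpHoms

variable {A B Z : C} {f : A ⟶ B} {g : B ⟶ Z}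

lemma ses_op (h : SES f g) : SES g.op f.op :=
  ⟨by rw [← op_comp, h.w, op_zero], h.2.op⟩

lemma cov_op (h : CovExact 𝒲 f g) : ContraExact (Wop 𝒲) g.op f.op := by
  intro W hW
  obtain ⟨h1, h2, h3⟩ := h W.unop hW
  refine ⟨fun u v huv => ?_, fun v hv => ?_, fun t => ?_⟩
  · have : (u.unop ≫ f) = (v.unop ≫ f) := congrArg Quiver.Hom.unop huv
    exact Quiver.Hom.unop_inj (h1 this)
  · have hv' : v.unop ≫ g = 0 := by
      have := congrArg Quiver.Hom.unop hv
      simpa using this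
    obtain ⟨u, hu⟩ := h2 v.unop hv'
    exact ⟨u.op, Quiver.Hom.unop_inj (by simpa using hu)⟩
  · obtain ⟨u, hu⟩ := h3 t.unop
    exact ⟨u.op, Quiver.Hom.unop_inj (by simpa using hu)⟩

lemma contra_op (h : ContraExact 𝒲 f g) : CovExact (Wop 𝒲) g.op f.op := by
  intro W hW
  obtain ⟨h1, h2, h3⟩ := h W.unop hW
  refine ⟨fun u v huv => ?_, fun v hv => ?_, fun t => ?_⟩
  · have : (g ≫ u.unop) = (g ≫ v.unop) := congrArg Quiver.Hom.unop huv
    exact Quiver.Hom.unop_inj (h1 this)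
  · have hv' : f ≫ v.unop = 0 := by
      have := congrArg Quiver.Hom.unop hv
      simpa using this
    obtain ⟨u, hu⟩ := h2 v.unop hv'
    exact ⟨u.op, Quiver.Hom.unop_inj (by simpa using hu)⟩
  · obtain ⟨u, hu⟩ := h3 t.unop
    exact ⟨u.op, Quiver.Hom.unop_inj (by simpa using hu)⟩

end OpHoms

section UnopHoms

variable {A B Z : Cᵒᵖ} {f : A ⟶ B} {g : B ⟶ Z}

lemma ses_unop (h : SES f g) : SES g.unop f.unop :=
  ⟨by rw [← unop_comp, h.w, unop_zero], h.2.unop⟩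

lemma cov_unop (h : CovExact (Wop 𝒲) f g) : ContraExact 𝒲 g.unop f.unop := by
  intro W hW
  obtain ⟨h1, h2, h3⟩ := h (Opposite.op W) hW
  refine ⟨fun u v huv => ?_, fun v hv => ?_, fun t => ?_⟩
  · have huv' : f.unop ≫ u = f.unop ≫ v := huv
    have : u.op ≫ f = v.op ≫ f := by
      apply Quiver.Hom.unop_inj
      simpa using huv'
    exact Quiver.Hom.op_inj (h1 this)
  · have hv0 : g.unop ≫ v = 0 := hv
    have hv' : v.op ≫ g = 0 := by
      apply Quiver.Hom.unop_inj
      simpa using hv0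
    obtain ⟨u, hu⟩ := h2 v.op hv'
    refine ⟨u.unop, ?_⟩
    show f.unop ≫ u.unop = v
    have := congrArg Quiver.Hom.unop hu
    simpa using this
  · obtain ⟨u, hu⟩ := h3 t.op
    refine ⟨u.unop, ?_⟩
    show g.unop ≫ u.unop = t
    have := congrArg Quiver.Hom.unop hu
    simpa using this

lemma contra_unop (h : ContraExact (Wop 𝒲) f g) : CovExact 𝒲 g.unop f.unop := by
  intro W hW
  obtain ⟨h1, h2, h3⟩ := h (Opposite.op W) hW
  refine ⟨fun u v huv => ?_, fun v hv => ?_, fun t => ?_⟩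
  · have huv' : u ≫ g.unop = v ≫ g.unop := huv
    have : g ≫ u.op = g ≫ v.op := by
      apply Quiver.Hom.unop_inj
      simpa using huv'
    exact Quiver.Hom.op_inj (h1 this)
  · have hv0 : v ≫ f.unop = 0 := hv
    have hv' : f ≫ v.op = 0 := by
      apply Quiver.Hom.unop_inj
      simpa using hv0
    obtain ⟨u, hu⟩ := h2 v.op hv'
    refine ⟨u.unop, ?_⟩
    show u.unop ≫ g.unop = v
    have := congrArg Quiver.Hom.unop hu
    simpa using this
  · obtain ⟨u, hu⟩ := h3 t.op
    refine ⟨u.unop, ?_⟩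
    show u.unop ≫ f.unop = t
    have := congrArg Quiver.Hom.unop hu
    simpa using this

end UnopHoms

section ResCores

variable {A : C}

lemma res_op_of_cores (h : Cores 𝒲 A) : Res (Wop 𝒲) (Opposite.op A) := by
  obtain ⟨W, R, hc⟩ := h
  refine ⟨fun n => Opposite.op (W n),
    { K := fun n => Opposite.op (R.K n)
      hK := congrArg Opposite.op R.hK
      g := fun i => (R.f i).op
      f := fun i => (R.g i).op
      mem := fun i => R.mem i
      ses := fun i => ses_op (R.ses i)
      proper := fun i => contra_op (R.coproper i) },
    fun i => cov_op (hc i)⟩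

lemma cores_op_of_res (h : Res 𝒲 A) : Cores (Wop 𝒲) (Opposite.op A) := by
  obtain ⟨W, R, hc⟩ := h
  refine ⟨fun n => Opposite.op (W n),
    { K := fun n => Opposite.op (R.K n)
      hK := congrArg Opposite.op R.hK
      g := fun i => (R.f i).op
      f := fun i => (R.g i).op
      mem := fun i => R.mem i
      ses := fun i => ses_op (R.ses i)
      coproper := fun i => cov_op (R.proper i) },
    fun i => contra_op (hc i)⟩

lemma cores_of_res_op (h : Res (Wop 𝒲) (Opposite.op A)) : Cores 𝒲 A := by
  obtain ⟨W, R, hc⟩ := h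
  refine ⟨fun n => (W n).unop,
    { K := fun n => (R.K n).unop
      hK := congrArg Opposite.unop R.hK
      g := fun i => (R.f i).unop
      f := fun i => (R.g i).unop
      mem := fun i => R.mem i
      ses := fun i => ses_unop (R.ses i)
      coproper := fun i => cov_unop (R.proper i) },
    fun i => contra_unop (hc i)⟩

lemma res_of_cores_op (h : Cores (Wop 𝒲) (Opposite.op A)) : Res 𝒲 A := by
  obtain ⟨W, R, hc⟩ := h
  refine ⟨fun n => (W n).unop,
    { K := fun n => (R.K n).unop
      hK := congrArg Opposite.unop R.hK
      g := fun i => (R.f i).unop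
      f := fun i => (R.g i).unop
      mem := fun i => R.mem i
      ses := fun i => ses_unop (R.ses i)
      proper := fun i => contra_unop (R.coproper i) },
    fun i => cov_unop (hc i)⟩

lemma memGW_op (h : MemGW 𝒲 A) : MemGW (Wop 𝒲) (Opposite.op A) :=
  ⟨res_op_of_cores h.2, cores_op_of_res h.1⟩

lemma memGW_of_op (h : MemGW (Wop 𝒲) (Opposite.op A)) : MemGW 𝒲 A :=
  ⟨res_of_cores_op h.2, cores_of_res_op h.1⟩

end ResCores

end Op

end GW

namespace GW

variable {C : Type u} [Category.{v} C] [Abelian C]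

section Split

variable {𝒲 : Set C} {A B Z : C} {f : A ⟶ B} {g : B ⟶ Z}

lemma split_cov (s : Z ⟶ B) (hs : s ≫ g = 𝟙 Z) (h : SES f g) : CovExact 𝒲 f g :=
  covExact_of_lift h (fun _ _ v => ⟨v ≫ s, by rw [Category.assoc, hs, Category.comp_id]⟩)

lemma split_contra (s : Z ⟶ B) (hs : s ≫ g = 𝟙 Z) (h : SES f g) : ContraExact 𝒲 f g := by
  have hm := h.mono
  obtain ⟨r, hr⟩ := h.lift (𝟙 B - g ≫ s) (by simp [Preadditive.sub_comp, Category.assoc, hs])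
  have hfr : f ≫ r = 𝟙 A := by
    have : (f ≫ r) ≫ f = 𝟙 A ≫ f := by
      rw [Category.assoc, hr, Category.id_comp, Preadditive.comp_sub, Category.comp_id,
        ← Category.assoc, h.w, zero_comp, sub_zero]
    exact (cancel_mono f).1 this
  exact contraExact_of_ext h (fun W _ v => ⟨r ≫ v, by rw [← Category.assoc, hfr, Category.id_comp]⟩)

/-- the split short exact sequence `0 ⟶ W ⟶ W ⊞ W' ⟶ W' ⟶ 0` -/
lemma ses_biprod (W W' : C) : SES (biprod.inl : W ⟶ W ⊞ W') (biprod.snd : W ⊞ W' ⟶ W') := by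
  refine ⟨by simp, ?_⟩
  exact (CategoryTheory.ShortComplex.Splitting.ofHasBinaryBiproduct W W').shortExact

/-- every object of `𝒲` has a proper resolution. -/
lemma res_of_mem {𝒲 : Set C} (hsum : ∀ {U V : C}, U ∈ 𝒲 → V ∈ 𝒲 → (U ⊞ V) ∈ 𝒲)
    {A : C} (hA : A ∈ 𝒲) : Res 𝒲 A := by
  refine res_of_coalgebra (S := 𝒲) (fun B hB => ?_) hA
  have h := ses_biprod B B
  exact ⟨B ⊞ B, B, biprod.inl, biprod.snd, hsum hB hB, hB, h,
    split_cov biprod.inr (by simp) h, split_contra biprod.inr (by simp) h⟩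

/-- an object with one good resolution step whose kernel is resolvable is resolvable. -/
lemma step_res {𝒲 : Set C} {A : C} (h : Step 𝒲 (Res 𝒲) A) : Res 𝒲 A := by
  refine res_of_coalgebra (S := fun D => Step 𝒲 (Res 𝒲) D) (fun D hD => ?_) h
  obtain ⟨W, K, g, f, hW, hK, hses, hcov, hcon⟩ := hD
  exact ⟨W, K, g, f, hW, GW.Res.step hK, hses, hcov, hcon⟩

end Split

end GW

namespace GW

variable {C : Type u} [Category.{v} C] [Abelian C]

section KernelConstructors

variable {A B Z : C}

/-- Build a `SES` from a mono which satisfies the universal property of the kernel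
of an epi. -/
lemma sesOfKernel (f : A ⟶ B) (g : B ⟶ Z) (w : f ≫ g = 0) (hm : Mono f) (he : Epi g)
    (hfac : ∀ {T : C} (t : T ⟶ B), t ≫ g = 0 → ∃ l : T ⟶ A, l ≫ f = t) : SES f g := by
  refine ⟨w, CategoryTheory.ShortComplex.ShortExact.mk' ?_ hm he⟩
  exact CategoryTheory.ShortComplex.exact_of_f_is_kernel _
    (KernelFork.IsLimit.ofι' f w (fun k hk => ⟨(hfac k hk).choose, (hfac k hk).choose_spec⟩))

/-- Build a `SES` from an epi which satisfies the universal property of the cokernel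
of a mono. -/
lemma sesOfCokernel (f : A ⟶ B) (g : B ⟶ Z) (w : f ≫ g = 0) (hm : Mono f) (he : Epi g)
    (hfac : ∀ {T : C} (t : B ⟶ T), f ≫ t = 0 → ∃ l : Z ⟶ T, g ≫ l = t) : SES f g := by
  refine ⟨w, CategoryTheory.ShortComplex.ShortExact.mk' ?_ hm he⟩
  exact CategoryTheory.ShortComplex.exact_of_g_is_cokernel _
    (CokernelCofork.IsColimit.ofπ' g w (fun k hk => ⟨(hfac k hk).choose, (hfac k hk).choose_spec⟩))

end KernelConstructors

section PullbackSES

variable {𝒲 : Set C} {A B Z D : C} {a : A ⟶ B} {q : B ⟶ Z}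

/-- Pulling back a (bi-)exact SES `0 → A → B → Z → 0` along `d : D ⟶ Z`:
the resulting sequence `0 → A → V → D → 0` (via `pullback.fst`). -/
lemma pb_fst (h : SES a q) (hcov : CovExact 𝒲 a q) (hcon : ContraExact 𝒲 a q)
    (d : D ⟶ Z) :
    SES (pullback.lift (0 : A ⟶ D) a (by rw [zero_comp, h.w]) : A ⟶ pullback d q)
        (pullback.fst d q) ∧
    CovExact 𝒲 (pullback.lift (0 : A ⟶ D) a (by rw [zero_comp, h.w]) : A ⟶ pullback d q)
        (pullback.fst d q) ∧
    ContraExact 𝒲 (pullback.lift (0 : A ⟶ D) a (by rw [zero_comp, h.w]) : A ⟶ pullback d q)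
        (pullback.fst d q) := by
  have hma := h.mono
  have hq := h.epi
  set m : A ⟶ pullback d q := pullback.lift (0 : A ⟶ D) a (by rw [zero_comp, h.w]) with hm
  have hmsnd : m ≫ pullback.snd d q = a := pullback.lift_snd _ _ _
  have hmono : Mono m := by
    have : Mono (m ≫ pullback.snd d q) := by rw [hmsnd]; infer_instance
    exact mono_of_mono m (pullback.snd d q)
  have hepi : Epi (pullback.fst d q) := inferInstance
  have hw : m ≫ pullback.fst d q = 0 := pullback.lift_fst _ _ _
  have hses : SES m (pullback.fst d q) := by
    refine sesOfKernel _ _ hw hmono hepi (fun {T} t ht => ?_)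
    have h1 : (t ≫ pullback.snd d q) ≫ q = 0 := by
      rw [Category.assoc, ← pullback.condition, ← Category.assoc, ht, zero_comp]
    obtain ⟨u, hu⟩ := h.lift _ h1
    refine ⟨u, ?_⟩
    apply pullback.hom_ext
    · rw [Category.assoc, hw, comp_zero, ht]
    · rw [Category.assoc, hmsnd, hu]
  refine ⟨hses, covExact_of_lift hses (fun W hW t => ?_),
    contraExact_of_ext hses (fun W hW v => ?_)⟩
  · obtain ⟨u, hu⟩ := hcov.lift hW (t ≫ d)
    exact ⟨pullback.lift t u hu.symm, pullback.lift_fst _ _ _⟩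
  · obtain ⟨w, hw'⟩ := hcon.ext hW v
    exact ⟨pullback.snd d q ≫ w, by rw [← Category.assoc, hmsnd, hw']⟩

/-- Pulling back along the second leg: if `0 → A → B → Z → 0` is a bi-exact SES and
`e : E ⟶ Z`, then `0 → A → pullback q e → E → 0` via `pullback.snd`. -/
lemma pb_snd (h : SES a q) (hcov : CovExact 𝒲 a q) (hcon : ContraExact 𝒲 a q)
    {E : C} (e : E ⟶ Z) :
    SES (pullback.lift a (0 : A ⟶ E) (by rw [zero_comp, h.w]) : A ⟶ pullback q e)
        (pullback.snd q e) ∧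
    CovExact 𝒲 (pullback.lift a (0 : A ⟶ E) (by rw [zero_comp, h.w]) : A ⟶ pullback q e)
        (pullback.snd q e) ∧
    ContraExact 𝒲 (pullback.lift a (0 : A ⟶ E) (by rw [zero_comp, h.w]) : A ⟶ pullback q e)
        (pullback.snd q e) := by
  have hma := h.mono
  have hq := h.epi
  set m : A ⟶ pullback q e := pullback.lift a (0 : A ⟶ E) (by rw [zero_comp, h.w]) with hm
  have hmfst : m ≫ pullback.fst q e = a := pullback.lift_fst _ _ _
  have hmono : Mono m := by
    have : Mono (m ≫ pullback.fst q e) := by rw [hmfst]; infer_instance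
    exact mono_of_mono m (pullback.fst q e)
  have hepi : Epi (pullback.snd q e) := inferInstance
  have hw : m ≫ pullback.snd q e = 0 := pullback.lift_snd _ _ _
  have hses : SES m (pullback.snd q e) := by
    refine sesOfKernel _ _ hw hmono hepi (fun {T} t ht => ?_)
    have h1 : (t ≫ pullback.fst q e) ≫ q = 0 := by
      rw [Category.assoc, pullback.condition, ← Category.assoc, ht, zero_comp]
    obtain ⟨u, hu⟩ := h.lift _ h1
    refine ⟨u, ?_⟩
    apply pullback.hom_ext
    · rw [Category.assoc, hmfst, hu]
    · rw [Category.assoc, hw, comp_zero, ht]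
  refine ⟨hses, covExact_of_lift hses (fun W hW t => ?_),
    contraExact_of_ext hses (fun W hW v => ?_)⟩
  · obtain ⟨u, hu⟩ := hcov.lift hW (t ≫ e)
    exact ⟨pullback.lift u t hu, pullback.lift_snd _ _ _⟩
  · obtain ⟨w, hw'⟩ := hcon.ext hW v
    exact ⟨pullback.fst q e ≫ w, by rw [← Category.assoc, hmfst, hw']⟩

end PullbackSES

end GW

namespace GW

open CategoryTheory.Abelian CategoryTheory.Abelian.Pseudoelement
open scoped Pseudoelement

variable {C : Type u} [Category.{v} C] [Abelian C]

/-- Kernel of a composite of two (bi-)exact epis: if `0 → W → B → A → 0` (via `ι`, `p`)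
and `0 → K → D → B → 0` (via `k`, `e`) are bi-exact SESs, then the kernel `K̃` of
`e ≫ p` gives bi-exact SESs `0 → K̃ → D → A → 0` and `0 → K → K̃ → W → 0`. -/
lemma cek {𝒲 : Set C} {W B A K D : C} {ι : W ⟶ B} {p : B ⟶ A} {k : K ⟶ D} {e : D ⟶ B}
    (h1 : SES ι p) (c1 : CovExact 𝒲 ι p) (x1 : ContraExact 𝒲 ι p)
    (h2 : SES k e) (c2 : CovExact 𝒲 k e) (x2 : ContraExact 𝒲 k e) :
    ∃ (Kt : C) (κ : Kt ⟶ D) (j : K ⟶ Kt) (π : Kt ⟶ W),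
      SES κ (e ≫ p) ∧ CovExact 𝒲 κ (e ≫ p) ∧ ContraExact 𝒲 κ (e ≫ p) ∧
      SES j π ∧ CovExact 𝒲 j π ∧ ContraExact 𝒲 j π := by
  have hι := h1.mono
  have hp := h1.epi
  have hk := h2.mono
  have he := h2.epi
  have hep : Epi (e ≫ p) := epi_comp e p
  set Kt := kernel (e ≫ p) with hKt
  set κ : Kt ⟶ D := kernel.ι (e ≫ p) with hκ
  have hκm : Mono κ := inferInstance
  -- the map π : K̃ ⟶ W
  have hκe : (κ ≫ e) ≫ p = 0 := by rw [Category.assoc, kernel.condition]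
  obtain ⟨π, hπ⟩ := h1.lift (κ ≫ e) hκe
  -- the map j : K ⟶ K̃
  have hkep : k ≫ e ≫ p = 0 := by rw [← Category.assoc, h2.w, zero_comp]
  set j : K ⟶ Kt := kernel.lift (e ≫ p) k hkep with hj
  have hjκ : j ≫ κ = k := kernel.lift_ι _ _ _
  -- SES 0 → K̃ → D → A → 0
  have hses1 : SES κ (e ≫ p) := by
    refine sesOfKernel _ _ (kernel.condition _) hκm hep (fun {T} t ht => ?_)
    exact ⟨kernel.lift _ t ht, kernel.lift_ι _ _ _⟩
  -- SES 0 → K → K̃ → W → 0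
  have hjπ : j ≫ π = 0 := by
    have : (j ≫ π) ≫ ι = 0 ≫ ι := by
      rw [Category.assoc, hπ, ← Category.assoc, hjκ, h2.w, zero_comp]
    exact (cancel_mono ι).1 this
  have hjm : Mono j := by
    have : Mono (j ≫ κ) := by rw [hjκ]; infer_instance
    exact mono_of_mono j κ
  have hπe : Epi π := by
    apply epi_of_pseudo_surjective
    intro w
    obtain ⟨d, hd⟩ := h2.psurj (pseudoApply ι w)
    have hd0 : pseudoApply (e ≫ p) d = 0 := by
      rw [Pseudoelement.comp_apply, hd]
      exact h1.pexact' w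
    obtain ⟨x, hx⟩ := hses1.pexact d hd0
    refine ⟨x, ?_⟩
    apply h1.pinj
    show pseudoApply ι (pseudoApply π x) = pseudoApply ι w
    rw [← Pseudoelement.comp_apply, hπ, Pseudoelement.comp_apply, hx, hd]
  have hses2 : SES j π := by
    refine sesOfPseudo hjπ hjm hπe (fun x hx => ?_)
    have : pseudoApply e (pseudoApply κ x) = 0 := by
      rw [← Pseudoelement.comp_apply, ← hπ, Pseudoelement.comp_apply, hx, apply_zero]
    obtain ⟨y, hy⟩ := h2.pexact _ this
    refine ⟨y, ?_⟩
    apply hses1.pinj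
    show pseudoApply κ (pseudoApply j y) = pseudoApply κ x
    rw [← Pseudoelement.comp_apply, hjκ, hy]
  -- Cov/Contra for both
  have hcov1 : CovExact 𝒲 κ (e ≫ p) := by
    refine covExact_of_lift hses1 (fun T hT t => ?_)
    obtain ⟨u1, hu1⟩ := c1.lift hT t
    obtain ⟨u2, hu2⟩ := c2.lift hT u1
    exact ⟨u2, by rw [← Category.assoc, hu2, hu1]⟩
  have hcov2 : CovExact 𝒲 j π := by
    refine covExact_of_lift hses2 (fun T hT t => ?_)
    obtain ⟨u, hu⟩ := c2.lift hT (t ≫ ι)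
    have hu0 : u ≫ e ≫ p = 0 := by rw [← Category.assoc, hu, Category.assoc, h1.w, comp_zero]
    obtain ⟨u', hu'⟩ := hses1.lift u hu0
    refine ⟨u', (cancel_mono ι).1 ?_⟩
    rw [Category.assoc, hπ, ← Category.assoc, hu', hu]
  have hcon2 : ContraExact 𝒲 j π := by
    refine contraExact_of_ext hses2 (fun T hT v => ?_)
    obtain ⟨w, hw⟩ := x2.ext hT v
    exact ⟨κ ≫ w, by rw [← Category.assoc, hjκ, hw]⟩
  have hcon1 : ContraExact 𝒲 κ (e ≫ p) := by
    refine contraExact_of_ext hses1 (fun T hT v => ?_)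
    obtain ⟨w, hw⟩ := x2.ext hT (j ≫ v)
    have h0 : j ≫ (v - κ ≫ w) = 0 := by
      rw [Preadditive.comp_sub, ← Category.assoc, hjκ, hw, sub_self]
    obtain ⟨x, hx⟩ := hses2.desc _ h0
    obtain ⟨y, hy⟩ := x1.ext hT x
    refine ⟨w + e ≫ y, ?_⟩
    rw [Preadditive.comp_add, ← Category.assoc, ← hπ, Category.assoc, hy, hx]
    abel
  exact ⟨Kt, κ, j, π, hses1, hcov1, hcon1, hses2, hcov2, hcon2⟩

end GW

namespace GW

open CategoryTheory.Abelian CategoryTheory.Abelian.Pseudoelement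
open scoped Pseudoelement

variable {C : Type u} [Category.{v} C] [Abelian C]

/-- Horseshoe step: given a bi-exact SES `0 → A → B → Cq → 0` and good one-step
resolutions of `A` and `Cq`, construct a good one-step resolution of `B` with term
`WA ⊞ WC`, whose kernel sits in a bi-exact SES between the two given kernels. -/
lemma horseshoe_step {𝒲 : Set C} {A B Cq : C} {i : A ⟶ B} {p : B ⟶ Cq}
    (hses : SES i p) (hcov : CovExact 𝒲 i p) (hcon : ContraExact 𝒲 i p)
    {WA KA : C} {gA : KA ⟶ WA} {fA : WA ⟶ A}
    (hA : SES gA fA) (cA : CovExact 𝒲 gA fA) (xA : ContraExact 𝒲 gA fA)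
    {WC KC : C} {gC : KC ⟶ WC} {fC : WC ⟶ Cq}
    (hWC : WC ∈ 𝒲) (hC : SES gC fC) (cC : CovExact 𝒲 gC fC) (xC : ContraExact 𝒲 gC fC) :
    ∃ (KB : C) (gB : KB ⟶ WA ⊞ WC) (fB : WA ⊞ WC ⟶ B) (jA : KA ⟶ KB) (πC : KB ⟶ KC),
      SES gB fB ∧ CovExact 𝒲 gB fB ∧ ContraExact 𝒲 gB fB ∧
      SES jA πC ∧ CovExact 𝒲 jA πC ∧ ContraExact 𝒲 jA πC := by
  have hiM := hses.mono
  have hpE := hses.epi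
  have hgAM := hA.mono
  have hfAE := hA.epi
  have hgCM := hC.mono
  have hfCE := hC.epi
  -- a lift of fC through p
  obtain ⟨lam, hlam⟩ := hcov.lift hWC fC
  set fB : WA ⊞ WC ⟶ B := biprod.desc (fA ≫ i) lam with hfB
  have hinl : biprod.inl ≫ fB = fA ≫ i := biprod.inl_desc _ _
  have hinr : biprod.inr ≫ fB = lam := biprod.inr_desc _ _
  -- fB is epi
  have hfBE : Epi fB := by
    rw [Preadditive.epi_iff_cancel_zero]
    intro T t ht
    have h1 : fA ≫ i ≫ t = 0 := by
      rw [← Category.assoc, ← hinl, Category.assoc, ht, comp_zero]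
    have h2 : i ≫ t = 0 := by
      rw [← cancel_epi fA, h1, comp_zero]
    obtain ⟨t', ht'⟩ := hses.desc t h2
    have h3 : fC ≫ t' = 0 := by
      rw [← hlam, Category.assoc, ht', ← hinr, Category.assoc, ht, comp_zero]
    have h4 : t' = 0 := by rw [← cancel_epi fC, h3, comp_zero]
    rw [← ht', h4, comp_zero]
  set KB := kernel fB with hKB
  set gB : KB ⟶ WA ⊞ WC := kernel.ι fB with hgB
  have hsesB : SES gB fB := by
    refine sesOfKernel _ _ (kernel.condition _) inferInstance hfBE (fun {T} t ht => ?_)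
    exact ⟨kernel.lift _ t ht, kernel.lift_ι _ _ _⟩
  -- the map jA : KA ⟶ KB
  have hkA0 : (gA ≫ biprod.inl) ≫ fB = 0 := by
    rw [Category.assoc, hinl, ← Category.assoc, hA.w, zero_comp]
  set jA : KA ⟶ KB := kernel.lift fB (gA ≫ biprod.inl) hkA0 with hjA
  have hjAgB : jA ≫ gB = gA ≫ biprod.inl := kernel.lift_ι _ _ _
  -- decomposition of fB
  have hdec : biprod.snd ≫ lam = fB - biprod.fst ≫ fA ≫ i := by
    ext
    · rw [Preadditive.comp_sub, hinl]
      simp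
    · rw [Preadditive.comp_sub, hinr]
      simp
  -- the map πC : KB ⟶ KC
  have hsnd0 : (gB ≫ biprod.snd) ≫ fC = 0 := by
    rw [← hlam]
    have : (gB ≫ biprod.snd) ≫ lam ≫ p = (gB ≫ (biprod.snd ≫ lam)) ≫ p := by
      simp [Category.assoc]
    rw [this, hdec, Preadditive.comp_sub, Preadditive.sub_comp, kernel.condition, zero_comp]
    simp [Category.assoc, hses.w]
  obtain ⟨piC, hpiC⟩ := hC.lift (gB ≫ biprod.snd) hsnd0
  -- SES jA piC
  have hw2 : jA ≫ piC = 0 := by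
    rw [← cancel_mono gC, Category.assoc, hpiC, zero_comp, ← Category.assoc, hjAgB,
      Category.assoc, biprod.inl_snd, comp_zero]
  have hjAM : Mono jA := by
    have : Mono (jA ≫ gB) := by
      rw [hjAgB]
      exact mono_comp _ _
    exact mono_of_mono jA gB
  have hbp := ses_biprod WA WC
  have hpiE : Epi piC := by
    apply epi_of_pseudo_surjective
    intro c
    have hinrp := reassoc_of% hinr
    have hmor : gC ≫ biprod.inr ≫ fB ≫ p = 0 := by
      rw [hinrp, hlam, hC.w]
    have h0 : pseudoApply p (pseudoApply fB (pseudoApply biprod.inr (pseudoApply gC c))) = 0 := by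
      rw [← Pseudoelement.comp_apply, ← Pseudoelement.comp_apply,
        ← Pseudoelement.comp_apply, hmor]
      exact zero_apply _ _
    obtain ⟨a, ha⟩ := hses.pexact _ h0
    obtain ⟨wa, hwa⟩ := hA.psurj a
    have heq : pseudoApply fB (pseudoApply biprod.inl wa) =
        pseudoApply fB (pseudoApply biprod.inr (pseudoApply gC c)) := by
      rw [← Pseudoelement.comp_apply, hinl, Pseudoelement.comp_apply, hwa, ha]
    obtain ⟨z, hz0, hz⟩ := sub_of_eq_image fB _ _ heq.symm
    have hsndz : pseudoApply biprod.snd z = pseudoApply gC c := by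
      rw [hz _ biprod.snd (by rw [← Pseudoelement.comp_apply, biprod.inl_snd, Pseudoelement.zero_apply]),
        ← Pseudoelement.comp_apply, biprod.inr_snd]
      exact pseudo_id _
    obtain ⟨b, hb⟩ := hsesB.pexact z hz0
    refine ⟨b, hC.pinj ?_⟩
    show pseudoApply gC (pseudoApply piC b) = pseudoApply gC c
    rw [← Pseudoelement.comp_apply, hpiC, Pseudoelement.comp_apply, hb, hsndz]
  have hses2 : SES jA piC := by
    refine sesOfPseudo hw2 hjAM hpiE (fun b hb => ?_)
    have hsnd : pseudoApply biprod.snd (pseudoApply gB b) = 0 := by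
      rw [← Pseudoelement.comp_apply, ← hpiC, Pseudoelement.comp_apply, hb, apply_zero]
    obtain ⟨wa, hwa⟩ := hbp.pexact _ hsnd
    have hifa : pseudoApply i (pseudoApply fA wa) = 0 := by
      rw [← Pseudoelement.comp_apply, ← hinl, Pseudoelement.comp_apply, hwa,
        ← Pseudoelement.comp_apply, kernel.condition, Pseudoelement.zero_apply]
    have hfa0 : pseudoApply fA wa = 0 := zero_of_map_zero _ hses.pinj _ hifa
    obtain ⟨ka, hka⟩ := hA.pexact _ hfa0
    refine ⟨ka, hsesB.pinj ?_⟩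
    show pseudoApply gB (pseudoApply jA ka) = pseudoApply gB b
    rw [← Pseudoelement.comp_apply, hjAgB, Pseudoelement.comp_apply, hka, hwa]
  -- Cov/Contra for (gB, fB)
  have hcovB : CovExact 𝒲 gB fB := by
    refine covExact_of_lift hsesB (fun T hT t => ?_)
    obtain ⟨u, hu⟩ := cC.lift hT (t ≫ p)
    have h1 : (t - u ≫ lam) ≫ p = 0 := by
      rw [Preadditive.sub_comp, Category.assoc, hlam, hu, sub_self]
    obtain ⟨v, hv⟩ := hses.lift _ h1
    obtain ⟨w, hw⟩ := cA.lift hT v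
    refine ⟨biprod.lift w u, ?_⟩
    rw [hfB, biprod.lift_desc, ← Category.assoc, hw, hv]
    abel
  have hconB : ContraExact 𝒲 gB fB := by
    refine contraExact_of_ext hsesB (fun T hT v => ?_)
    obtain ⟨w1, hw1⟩ := xA.ext hT (jA ≫ v)
    have e1 : jA ≫ gB ≫ biprod.fst ≫ w1 = jA ≫ v := by
      rw [← Category.assoc, hjAgB]
      simp only [Category.assoc, biprod.inl_fst_assoc]
      exact hw1
    have h0 : jA ≫ (v - gB ≫ biprod.fst ≫ w1) = 0 := by
      rw [Preadditive.comp_sub, e1, sub_self]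
    obtain ⟨x, hx⟩ := hses2.desc _ h0
    obtain ⟨y, hy⟩ := xC.ext hT x
    refine ⟨biprod.fst ≫ w1 + biprod.snd ≫ y, ?_⟩
    have e2 : gB ≫ biprod.snd ≫ y = v - gB ≫ biprod.fst ≫ w1 := by
      rw [← Category.assoc, ← hpiC, Category.assoc, hy, hx]
    rw [Preadditive.comp_add, e2]
    abel
  have hcov2 : CovExact 𝒲 jA piC := by
    refine covExact_of_lift hses2 (fun T hT t => ?_)
    have h1 : ((t ≫ gC) ≫ lam) ≫ p = 0 := by
      rw [Category.assoc, hlam, Category.assoc, hC.w, comp_zero]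
    obtain ⟨v, hv⟩ := hses.lift _ h1
    obtain ⟨w, hw⟩ := cA.lift hT v
    have h2 : (biprod.lift (-w) (t ≫ gC)) ≫ fB = 0 := by
      rw [hfB, biprod.lift_desc, Preadditive.neg_comp, ← Category.assoc, hw, hv]
      abel
    obtain ⟨s, hs⟩ := hsesB.lift _ h2
    refine ⟨s, (cancel_mono gC).1 ?_⟩
    rw [Category.assoc, hpiC, ← Category.assoc, hs, biprod.lift_snd]
  have hcon2 : ContraExact 𝒲 jA piC := by
    refine contraExact_of_ext hses2 (fun T hT v => ?_)
    obtain ⟨w, hw⟩ := xA.ext hT v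
    refine ⟨gB ≫ biprod.fst ≫ w, ?_⟩
    rw [← Category.assoc, hjAgB]
    simp only [Category.assoc, biprod.inl_fst_assoc]
    exact hw
  exact ⟨KB, gB, fB, jA, piC, hsesB, hcovB, hconB, hses2, hcov2, hcon2⟩

end GW

namespace GW

variable {C : Type u} [Category.{v} C] [Abelian C]

section Main

variable {𝒲 : Set C}

/-- `Res` is closed under extensions along bi-exact SESs. -/
lemma ext_res (hsum : ∀ {U V : C}, U ∈ 𝒲 → V ∈ 𝒲 → (U ⊞ V) ∈ 𝒲)
    {A B Cq : C} {i : A ⟶ B} {p : B ⟶ Cq}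
    (hses : SES i p) (hcov : CovExact 𝒲 i p) (hcon : ContraExact 𝒲 i p)
    (hResA : Res 𝒲 A) (hResC : Res 𝒲 Cq) : Res 𝒲 B := by
  set S : Set C := {B' | ∃ (A' C' : C) (i' : A' ⟶ B') (p' : B' ⟶ C'),
    SES i' p' ∧ CovExact 𝒲 i' p' ∧ ContraExact 𝒲 i' p' ∧ Res 𝒲 A' ∧ Res 𝒲 C'} with hSdef
  refine res_of_coalgebra (S := S) (fun B' hB' => ?_)
    ⟨A, Cq, i, p, hses, hcov, hcon, hResA, hResC⟩
  obtain ⟨A', C', i', p', hses', hcov', hcon', hResA', hResC'⟩ := hB'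
  obtain ⟨WA, KA, gA, fA, hWA, hKA, sesA, covA, conA⟩ := hResA'.step
  obtain ⟨WC, KC, gC, fC, hWC, hKC, sesC, covC, conC⟩ := hResC'.step
  obtain ⟨KB, gB, fB, jA, piC, sesB, covB, conB, ses2, cov2, con2⟩ :=
    horseshoe_step hses' hcov' hcon' sesA covA conA hWC sesC covC conC
  exact ⟨WA ⊞ WC, KB, gB, fB, hsum hWA hWC,
    ⟨KA, KC, jA, piC, ses2, cov2, con2, hKA, hKC⟩, sesB, covB, conB⟩

/-- Flip a split SES: from `0 → A → B → Z → 0` with a section of `q`, get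
`0 → Z → B → A → 0`. -/
lemma ses_flip_split {A B Z : C} {m : A ⟶ B} {q : B ⟶ Z} (h : SES m q)
    (s : Z ⟶ B) (hs : s ≫ q = 𝟙 Z) :
    ∃ r : B ⟶ A, SES s r ∧ m ≫ r = 𝟙 A := by
  have hmM := h.mono
  obtain ⟨r, hr⟩ := h.lift (𝟙 B - q ≫ s)
    (by rw [Preadditive.sub_comp, Category.id_comp, Category.assoc, hs, Category.comp_id,
      sub_self])
  have hmr : m ≫ r = 𝟙 A := by
    rw [← cancel_mono m, Category.assoc, hr, Preadditive.comp_sub, Category.comp_id,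
      ← Category.assoc, h.w, zero_comp, sub_zero, Category.id_comp]
  have hsr : s ≫ r = 0 := by
    rw [← cancel_mono m, Category.assoc, hr, Preadditive.comp_sub, Category.comp_id,
      ← Category.assoc, hs, Category.id_comp, sub_self, zero_comp]
  have hsM : Mono s := by
    have : Mono (s ≫ q) := by rw [hs]; infer_instance
    exact mono_of_mono s q
  have hrE : Epi r := by
    have : Epi (m ≫ r) := by rw [hmr]; infer_instance
    exact epi_of_epi m r
  refine ⟨r, sesOfKernel _ _ hsr hsM hrE (fun {T} t ht => ?_), hmr⟩
  refine ⟨t ≫ q, ?_⟩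
  have hd0 : (t - (t ≫ q) ≫ s) ≫ q = 0 := by
    rw [Preadditive.sub_comp, Category.assoc, hs, Category.comp_id, sub_self]
  obtain ⟨u, hu⟩ := h.lift _ hd0
  have hu0 : u = 0 := by
    have : u ≫ m ≫ r = (t - (t ≫ q) ≫ s) ≫ r := by rw [← Category.assoc, hu]
    rw [hmr, Category.comp_id, Preadditive.sub_comp, ht, Category.assoc, hsr, comp_zero,
      sub_zero] at this
    exact this
  have : t - (t ≫ q) ≫ s = 0 := by rw [← hu, hu0, zero_comp]
  rw [← sub_eq_zero, ← neg_eq_zero, neg_sub]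
  exact this

/-- If `X` is the quotient of a resolvable object by a subobject in `𝒲`
(along a bi-exact SES), then `X` is resolvable. -/
lemma res_quot_of_W (hsum : ∀ {U V : C}, U ∈ 𝒲 → V ∈ 𝒲 → (U ⊞ V) ∈ 𝒲)
    {Wz B X : C} {ι : Wz ⟶ B} {r : B ⟶ X} (hWz : Wz ∈ 𝒲)
    (hses : SES ι r) (hcov : CovExact 𝒲 ι r) (hcon : ContraExact 𝒲 ι r)
    (hB : Res 𝒲 B) : Res 𝒲 X := by
  obtain ⟨WB, KB, gKB, e, hWB, hKB, ses2, cov2, con2⟩ := hB.step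
  obtain ⟨Kt, κ, j, π, sesK, covK, conK, sesJ, covJ, conJ⟩ :=
    cek hses hcov hcon ses2 cov2 con2
  have hResKt : Res 𝒲 Kt :=
    ext_res hsum sesJ covJ conJ hKB (res_of_mem hsum hWz)
  exact step_res ⟨WB, Kt, κ, e ≫ r, hWB, hResKt, sesK, covK, conK⟩

/-- Main lemma 1: if `0 → X → Y → Z → 0` is bi-exact and `Y`, `Z` are resolvable,
then so is `X`. -/
lemma m1 (hsum : ∀ {U V : C}, U ∈ 𝒲 → V ∈ 𝒲 → (U ⊞ V) ∈ 𝒲)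
    {X Y Z : C} {f : X ⟶ Y} {g : Y ⟶ Z}
    (hses : SES f g) (hcov : CovExact 𝒲 f g) (hcon : ContraExact 𝒲 f g)
    (hY : Res 𝒲 Y) (hZ : Res 𝒲 Z) : Res 𝒲 X := by
  obtain ⟨WZ, KZ, gZ, eZ, hWZ, hKZ, sesZ, covZ, conZ⟩ := hZ.step
  -- V := pullback g eZ
  obtain ⟨ses2, cov2, con2⟩ := pb_fst sesZ covZ conZ g
  have hResV : Res 𝒲 (pullback g eZ) := ext_res hsum ses2 cov2 con2 hKZ hY
  obtain ⟨ses1, cov1, con1⟩ := pb_snd hses hcov hcon eZ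
  -- section of pullback.snd g eZ
  obtain ⟨u, hu⟩ := hcov.lift hWZ eZ
  set s : WZ ⟶ pullback g eZ := pullback.lift u (𝟙 WZ) (by rw [hu, Category.id_comp]) with hsdef
  have hssnd : s ≫ pullback.snd g eZ = 𝟙 WZ := pullback.lift_snd _ _ _
  obtain ⟨rX, sesF, hmr⟩ := ses_flip_split ses1 s hssnd
  have covF : CovExact 𝒲 s rX :=
    split_cov _ hmr sesF
  have conF : ContraExact 𝒲 s rX :=
    split_contra _ hmr sesF
  exact res_quot_of_W hsum hWZ sesF covF conF hResV

/-- Main lemma 2: if `0 → X → Y → Z → 0` is bi-exact and `X`, `Y` are resolvable,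
then so is `Z`. -/
lemma m2 (hsum : ∀ {U V : C}, U ∈ 𝒲 → V ∈ 𝒲 → (U ⊞ V) ∈ 𝒲)
    {X Y Z : C} {f : X ⟶ Y} {g : Y ⟶ Z}
    (hses : SES f g) (hcov : CovExact 𝒲 f g) (hcon : ContraExact 𝒲 f g)
    (hY : Res 𝒲 Y) (hX : Res 𝒲 X) : Res 𝒲 Z := by
  obtain ⟨WY, KY, gY, eY, hWY, hKY, sesY, covY, conY⟩ := hY.step
  obtain ⟨Kt, κ, j, π, sesK, covK, conK, sesJ, covJ, conJ⟩ :=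
    cek hses hcov hcon sesY covY conY
  have hResKt : Res 𝒲 Kt := ext_res hsum sesJ covJ conJ hKY hX
  exact step_res ⟨WY, Kt, κ, eY ≫ g, hWY, hResKt, sesK, covK, conK⟩

end Main

end GW

namespace GW

variable {C : Type u} [Category.{v} C] [Abelian C]

/-- One implication: if `Y` and `Z` belong to `G(𝒲)`, then so does `X`. -/
lemma half (𝒲 : Set C)
    (hiso : ∀ {U V : C}, (U ≅ V) → U ∈ 𝒲 → V ∈ 𝒲)
    (hsum : ∀ {U V : C}, U ∈ 𝒲 → V ∈ 𝒲 → (U ⊞ V) ∈ 𝒲)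
    {X Y Z : C} (f : X ⟶ Y) (g : Y ⟶ Z)
    (hses : SES f g) (hcov : CovExact 𝒲 f g) (hcon : ContraExact 𝒲 f g)
    (hY : MemGW 𝒲 Y) (hZ : MemGW 𝒲 Z) : MemGW 𝒲 X := by
  constructor
  · exact m1 hsum hses hcov hcon hY.1 hZ.1
  · refine cores_of_res_op (𝒲 := 𝒲)
      (m2 (𝒲 := Wop 𝒲) (wop_sum hiso hsum) (f := g.op) (g := f.op)
        (ses_op hses) (contra_op hcon) (cov_op hcov) ?_ ?_)
    · exact res_op_of_cores hY.2
    · exact res_op_of_cores hZ.2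

end GW

/-- If `0→X→Y→Z→0` is both `Hom(𝒲,-)`-exact and `Hom(-,𝒲)`-exact and
`Y ∈ G(𝒲)`, then `X ∈ G(𝒲)` if and only if `Z ∈ G(𝒲)`. -/
theorem stmt_15 (𝒲 : Set C)
    (hiso : ∀ {U V : C}, (U ≅ V) → U ∈ 𝒲 → V ∈ 𝒲)
    (hsum : ∀ {U V : C}, U ∈ 𝒲 → V ∈ 𝒲 → (U ⊞ V) ∈ 𝒲)
    {X Y Z : C} (f : X ⟶ Y) (g : Y ⟶ Z)
    (hses : SES f g) (hcov : CovExact 𝒲 f g) (hcon : ContraExact 𝒲 f g)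
    (hY : MemGW 𝒲 Y) :
    MemGW 𝒲 X ↔ MemGW 𝒲 Z := by
  constructor
  · intro hX
    exact GW.memGW_of_op (GW.half (GW.Wop 𝒲) (GW.wop_iso hiso) (GW.wop_sum hiso hsum)
      g.op f.op (GW.ses_op hses) (GW.contra_op hcon) (GW.cov_op hcov)
      (GW.memGW_op hY) (GW.memGW_op hX))
  · intro hZ
    exact GW.half 𝒲 hiso hsum f g hses hcov hcon hY hZ
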